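/- Let f : [0,∞) → ℝ satisfy (H1), let λ, μ > 0, and suppose there exists a₀ > 0 such that f(x) ≠ 0 for all x ≥ a₀. If ∫_{a₀}^∞ 1/|f(x)| dx < ∞, then π_{n+1}/π_n → 0 as n → ∞ and consequently the series A = Σ_{n≥1} 1/π_n diverges to +∞. -/

import Mathlib

open MeasureTheory Set Filter

lemma aux_tsum_lintegral_Ioc_le (F : ℝ → ENNReal) (c : ℝ) :
    ∑' m : ℕ, ∫⁻ x in Ioc (c + m) (c + m + 1), F x ≤ ∫⁻ x in Ici c, F x := by
  set s : ℕ → Set ℝ := fun m => Ioc (c + m) (c + m + 1) with hs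
  have hdisj : Pairwise (Function.onFun Disjoint s) := by
    intro i j hij
    simp only [hs, Function.onFun, Set.Ioc_disjoint_Ioc]
    rcases hij.lt_or_gt with h | h
    · have : (i : ℝ) + 1 ≤ j := by exact_mod_cast h
      refine le_trans (min_le_left _ _) (le_trans (by linarith) (le_max_right _ _))
    · have : (j : ℝ) + 1 ≤ i := by exact_mod_cast h
      refine le_trans (min_le_right _ _) (le_trans (by linarith) (le_max_left _ _))
  have hmeas : ∀ m : ℕ, MeasurableSet (s m) := fun _ => measurableSet_Ioc
  have h1 : ∑' m : ℕ, ∫⁻ x in s m, F x = ∫⁻ x in ⋃ m, s m, F x := by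
    rw [Measure.restrict_iUnion hdisj hmeas, lintegral_sum_measure]
  rw [h1]
  refine lintegral_mono_set (iUnion_subset fun m x hx => ?_)
  have := hx.1
  have hm : (0:ℝ) ≤ m := Nat.cast_nonneg m
  exact mem_Ici.2 (by linarith)

lemma aux_lintegral_Ioc_const_le (F : ℝ → ENNReal) (α : ℝ) (C : ENNReal)
    (h : ∀ x ∈ Ioc α (α + 1), C ≤ F x) :
    C ≤ ∫⁻ x in Ioc α (α + 1), F x := by
  have h1 : C = C * volume (Ioc α (α + 1)) := by
    rw [Real.volume_Ioc]
    simp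
  calc C = ∫⁻ _ in Ioc α (α + 1), C := by rw [setLIntegral_const]; exact h1
    _ ≤ _ := lintegral_mono_ae (ae_restrict_of_forall_mem measurableSet_Ioc h)

lemma aux_harmonic_top (θ : ℝ) (hθ : 0 < θ) (K : ℕ) :
    ∑' m : ℕ, ENNReal.ofReal (1 / (θ * ((m : ℝ) + K + 1))) = ⊤ := by
  by_contra h
  have hsum := ENNReal.summable_toReal h
  have h2 : Summable (fun m : ℕ => 1 / (θ * ((m : ℝ) + K + 1))) := by
    refine hsum.congr fun m => ?_
    rw [ENNReal.toReal_ofReal]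
    positivity
  have h3 : Summable (fun m : ℕ => 1 / ((m : ℝ) + K + 1)) := by
    have := h2.mul_left θ
    refine this.congr fun m => ?_
    have hpos : (0:ℝ) < (m : ℝ) + K + 1 := by positivity
    field_simp
  have h4 : Summable (fun n : ℕ => 1 / (n : ℝ)) := by
    refine (summable_nat_add_iff (K + 1)).1 ?_
    refine h3.congr fun m => ?_
    push_cast; ring_nf
  exact Real.not_summable_one_div_natCast h4

lemma aux_tsum_top_of_one_le (u : ℕ → ENNReal) (N : ℕ) (h : ∀ n, N ≤ n → 1 ≤ u n) :
    ∑' n, u n = ⊤ := by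
  refine top_unique ?_
  calc (⊤ : ENNReal) = ∑' _ : ℕ, (1 : ENNReal) :=
        (ENNReal.tsum_const_eq_top_of_ne_zero one_ne_zero).symm
    _ ≤ ∑' k : ℕ, u (k + N) := ENNReal.tsum_le_tsum fun k => h _ (Nat.le_add_left N k)
    _ ≤ ∑' n, u n := ENNReal.tsum_comp_le_tsum_of_injective (add_left_injective N) u

/-- Under (H1), `λ, μ > 0`, `f x ≠ 0` for `x ≥ a₀`, if
`∫_{a₀}^∞ 1/|f x| dx < ∞` then `π_{n+1}/π_n → 0` and `A = Σ_{n≥1} 1/π_n = ∞`. -/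
theorem stmt6 (f : ℝ → ℝ) (θ : ℝ) (hθ : 0 ≤ θ)
    (hf_cont : ContinuousOn f (Ici 0)) (hf0 : f 0 = 0)
    (hH1 : ∀ x ≥ (0:ℝ), ∀ y ≥ (0:ℝ), f (x + y) - f y ≤ θ * x)
    (lam mu : ℝ) (hlam : 0 < lam) (hmu : 0 < mu)
    (a₀ : ℝ) (ha₀ : 0 < a₀) (hfne : ∀ x ≥ a₀, f x ≠ 0)
    (lamn mun : ℕ → ℝ)
    (hlamn : ∀ n : ℕ, lamn n = lam * n + ∑ ℓ ∈ Finset.Icc 1 n, max (f ℓ - f ((ℓ : ℝ) - 1)) 0)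
    (hmun : ∀ n : ℕ, mun n = mu * n + ∑ ℓ ∈ Finset.Icc 1 n, max (-(f ℓ - f ((ℓ : ℝ) - 1))) 0)
    (P : ℕ → ℝ) (hP1 : P 1 = 1)
    (hPn : ∀ n : ℕ, 2 ≤ n →
      P n = (∏ i ∈ Finset.Icc 1 n, lamn i) / (∏ i ∈ Finset.Icc 2 n, mun i))
    (hint : (∫⁻ x in Ici a₀, ENNReal.ofReal (1 / |f x|)) < ⊤) :
    Tendsto (fun n : ℕ => P (n + 2) / P (n + 1)) atTop (nhds 0) ∧
      (∑' n : ℕ, ENNReal.ofReal (1 / P (n + 1))) = ⊤ := by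
  -- basic consequences of (H1)
  have hlip : ∀ x y : ℝ, 0 ≤ x → x ≤ y → f y - f x ≤ θ * (y - x) := by
    intro x y hx hxy
    have := hH1 (y - x) (by linarith) x hx
    rwa [sub_add_cancel] at this
  have hfub : ∀ x : ℝ, 0 ≤ x → f x ≤ θ * x := by
    intro x hx
    have := hlip 0 x le_rfl hx
    simpa [hf0] using this
  -- the sign of f on [a₀, ∞) is negative
  have hsign : ∀ x : ℝ, a₀ ≤ x → f x < 0 := by
    by_contra hcon
    push_neg at hcon
    obtain ⟨b, hb, hfb⟩ := hcon
    have hb0 : 0 < b := lt_of_lt_of_le ha₀ hb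
    have hfbpos : 0 < f b := lt_of_le_of_ne hfb (Ne.symm (hfne b hb))
    have hpos : ∀ y : ℝ, b ≤ y → 0 < f y := by
      intro y hy
      rcases lt_or_ge 0 (f y) with h | h
      · exact h
      have hcont2 : ContinuousOn f (Icc b y) := hf_cont.mono fun z hz =>
        mem_Ici.2 (le_trans hb0.le hz.1)
      have h0 : (0:ℝ) ∈ Icc (f y) (f b) := mem_Icc.2 ⟨h, hfbpos.le⟩
      obtain ⟨z, hz, hz0⟩ := intermediate_value_Icc' hy hcont2 h0
      exact absurd hz0 (hfne z (le_trans hb hz.1))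
    have hθpos : 0 < θ := by
      have := hfub b hb0.le
      nlinarith
    set N₁ : ℕ := ⌈b⌉₊ + 1 with hN₁def
    have hbN₁ : b ≤ (N₁ : ℝ) := le_trans (Nat.le_ceil b) (by rw [hN₁def]; push_cast; linarith)
    have hlow : ∀ m : ℕ, ENNReal.ofReal (1 / (θ * ((m:ℝ) + N₁ + 1))) ≤
        ∫⁻ x in Ioc ((N₁:ℝ) + m) ((N₁:ℝ) + m + 1), ENNReal.ofReal (1 / |f x|) := by
      intro m
      refine aux_lintegral_Ioc_const_le _ _ _ fun x hx => ?_
      have hx1 : (N₁:ℝ) + m < x := hx.1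
      have hx2 : x ≤ (N₁:ℝ) + m + 1 := hx.2
      have hm : (0:ℝ) ≤ m := Nat.cast_nonneg m
      have hbx : b ≤ x := by linarith
      have hfxpos : 0 < f x := hpos x hbx
      refine ENNReal.ofReal_le_ofReal ?_
      rw [abs_of_pos hfxpos]
      have hub : f x ≤ θ * ((m:ℝ) + N₁ + 1) := by
        have := hfub x (by linarith)
        nlinarith
      exact one_div_le_one_div_of_le hfxpos hub
    have htop : ∑' m : ℕ, ∫⁻ x in Ioc ((N₁:ℝ) + m) ((N₁:ℝ) + m + 1),
        ENNReal.ofReal (1 / |f x|) = ⊤ := by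
      refine top_unique ?_
      rw [← aux_harmonic_top θ hθpos N₁]
      exact ENNReal.tsum_le_tsum hlow
    have hle := aux_tsum_lintegral_Ioc_le (fun x => ENNReal.ofReal (1 / |f x|)) (N₁ : ℝ)
    have hle2 : (∫⁻ x in Ici ((N₁:ℝ)), ENNReal.ofReal (1 / |f x|)) ≤
        ∫⁻ x in Ici a₀, ENNReal.ofReal (1 / |f x|) :=
      lintegral_mono_set (Ici_subset_Ici.2 (le_trans hb hbN₁))
    rw [htop] at hle
    exact absurd (le_trans hle hle2) (by simpa using hint.ne)

  have hlip : ∀ x y : ℝ, 0 ≤ x → x ≤ y → f y - f x ≤ θ * (y - x) := by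
    intro x y hx hxy
    have := hH1 (y - x) (by linarith) x hx
    rwa [sub_add_cancel] at this
  have hfub : ∀ x : ℝ, 0 ≤ x → f x ≤ θ * x := by
    intro x hx
    have := hlip 0 x le_rfl hx
    simpa [hf0] using this
  -- telescoping
  have htel : ∀ n : ℕ, ∑ ℓ ∈ Finset.Icc 1 n, (f ℓ - f ((ℓ : ℝ) - 1)) = f n := by
    intro n
    rw [← Finset.Ico_add_one_right_eq_Icc, Finset.sum_Ico_eq_sum_range]
    simp only [Nat.add_sub_cancel_left, Nat.add_sub_cancel]
    have : ∀ i : ℕ, f (↑(1 + i)) - f ((↑(1 + i) : ℝ) - 1) = f ↑(i + 1) - f ↑i := by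
      intro i
      have h1 : ((1 + i : ℕ) : ℝ) = (i : ℝ) + 1 := by push_cast; ring
      rw [h1]
      norm_num
    rw [Finset.sum_congr rfl fun i _ => this i, Finset.sum_range_sub (fun i => f i) n]
    simp [hf0]
  have hlam_ub : ∀ n : ℕ, lamn n ≤ (lam + θ) * n := by
    intro n
    rw [hlamn]
    have hsum : ∑ ℓ ∈ Finset.Icc 1 n, max (f ℓ - f ((ℓ : ℝ) - 1)) 0 ≤
        ∑ _ℓ ∈ Finset.Icc 1 n, θ := by
      refine Finset.sum_le_sum fun ℓ hℓ => max_le ?_ hθ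
      have hℓ1 : 1 ≤ ℓ := (Finset.mem_Icc.1 hℓ).1
      have h0 : (0:ℝ) ≤ (ℓ : ℝ) - 1 := by
        have : (1:ℝ) ≤ ℓ := by exact_mod_cast hℓ1
        linarith
      have := hlip ((ℓ:ℝ) - 1) ℓ h0 (by linarith)
      simpa using this
    rw [Finset.sum_const, Nat.card_Icc] at hsum
    simp only [Nat.add_sub_cancel, nsmul_eq_mul] at hsum
    nlinarith [Nat.cast_nonneg (α := ℝ) n]
  have hmax_nonneg : ∀ n : ℕ, (0:ℝ) ≤ ∑ ℓ ∈ Finset.Icc 1 n, max (f ℓ - f ((ℓ : ℝ) - 1)) 0 :=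
    fun n => Finset.sum_nonneg fun ℓ _ => le_max_right _ _
  have hmu_lb : ∀ n : ℕ, mu * n + (- f n) ≤ mun n := by
    intro n
    rw [hmun]
    have key : ∑ ℓ ∈ Finset.Icc 1 n, max (-(f ℓ - f ((ℓ : ℝ) - 1))) 0
        = (∑ ℓ ∈ Finset.Icc 1 n, max (f ℓ - f ((ℓ : ℝ) - 1)) 0) - f n := by
      rw [← htel n, ← Finset.sum_sub_distrib]
      refine Finset.sum_congr rfl fun ℓ _ => ?_
      rcases le_total (f ℓ - f ((ℓ : ℝ) - 1)) 0 with h | h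
      · rw [max_eq_left (neg_nonneg.2 h), max_eq_right h]; ring
      · rw [max_eq_right (neg_nonpos.2 h), max_eq_left h]; ring
    rw [key]
    have := hmax_nonneg n
    linarith
  have hlampos : ∀ n : ℕ, 1 ≤ n → 0 < lamn n := by
    intro n hn
    rw [hlamn]
    have : (1:ℝ) ≤ n := by exact_mod_cast hn
    nlinarith [hmax_nonneg n]
  have hmunpos : ∀ n : ℕ, 1 ≤ n → 0 < mun n := by
    intro n hn
    rw [hmun]
    have : (1:ℝ) ≤ n := by exact_mod_cast hn
    have h2 : (0:ℝ) ≤ ∑ ℓ ∈ Finset.Icc 1 n, max (-(f ℓ - f ((ℓ : ℝ) - 1))) 0 :=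
      Finset.sum_nonneg fun ℓ _ => le_max_right _ _
    nlinarith
  have hgrow : ∀ C : ℝ, 0 < C → ∀ᶠ n : ℕ in atTop, C * n ≤ -f n := by

    set N₀ : ℕ := ⌈a₀⌉₊ + 1 with hN₀def
    have hN₀ : a₀ ≤ (N₀ : ℝ) := le_trans (Nat.le_ceil a₀) (by rw [hN₀def]; push_cast; linarith)
    set a : ℕ → ENNReal :=
      fun m => ∫⁻ x in Ioc (m:ℝ) ((m:ℝ)+1), ENNReal.ofReal (1/|f x|) with ha
    have hsumfin : ∑' m : ℕ, a (m + N₀) ≠ ⊤ := by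
      refine ne_top_of_le_ne_top hint.ne ?_
      calc ∑' m : ℕ, a (m + N₀)
          = ∑' m : ℕ, ∫⁻ x in Ioc ((N₀:ℝ) + m) ((N₀:ℝ) + m + 1),
              ENNReal.ofReal (1/|f x|) := by
            refine tsum_congr fun m => ?_
            have h1 : ((m + N₀ : ℕ) : ℝ) = (N₀:ℝ) + m := by push_cast; ring
            rw [ha]
            simp only [h1]
        _ ≤ ∫⁻ x in Ici ((N₀:ℝ)), ENNReal.ofReal (1/|f x|) :=
            aux_tsum_lintegral_Ioc_le _ _
        _ ≤ ∫⁻ x in Ici a₀, ENNReal.ofReal (1/|f x|) :=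
            lintegral_mono_set (Ici_subset_Ici.2 hN₀)
    have hT0 : Tendsto (fun i => ∑' k : ℕ, a (k + i + N₀)) atTop (nhds 0) :=
      ENNReal.tendsto_sum_nat_add (fun m => a (m + N₀)) hsumfin
    have hblock : ∀ n : ℕ, 2*N₀ ≤ n →
        (↑(n - n/2) : ENNReal) * ENNReal.ofReal (1/(-f n + θ*((↑(n/2):ℝ)+1)))
          ≤ ∑' k : ℕ, a (k + (n/2 - N₀) + N₀) := by
      intro n hn
      set D : ℝ := -f n + θ*((↑(n/2):ℝ)+1) with hD
      have hterm : ∀ j : ℕ, j < n - n/2 → ENNReal.ofReal (1/D) ≤ a (j + n/2) := by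
        intro j hj
        set m : ℕ := j + n/2 with hm
        have hmN : N₀ ≤ m := by omega
        have hma : a₀ ≤ (m:ℝ) := le_trans hN₀ (by exact_mod_cast hmN)
        have hm1n : m + 1 ≤ n := by omega
        refine aux_lintegral_Ioc_const_le _ _ _ fun x hx => ?_
        have hx1 : (m:ℝ) < x := hx.1
        have hx2 : x ≤ (m:ℝ) + 1 := hx.2
        have hxn : x ≤ (n:ℝ) := le_trans hx2 (by exact_mod_cast hm1n)
        have hxa : a₀ ≤ x := le_trans hma hx1.le
        have hfx : f x < 0 := hsign x hxa
        have hfn : f n < 0 := hsign n (le_trans hN₀ (by exact_mod_cast (by omega : N₀ ≤ n)))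
        have hlipx := hlip x n (le_trans ha₀.le hxa) hxn
        have hcast : (n:ℝ) - m ≤ (↑(n/2):ℝ) + 1 := by
          have : (n:ℝ) ≤ (m:ℝ) + (↑(n/2):ℝ) + 1 := by
            exact_mod_cast (by omega : n ≤ m + n/2 + 1)
          linarith
        have hub : -f x ≤ D := by
          have h1 : θ * ((n:ℝ) - x) ≤ θ * ((n:ℝ) - m) := by
            apply mul_le_mul_of_nonneg_left (by linarith) hθ
          have h2 : θ * ((n:ℝ) - m) ≤ θ * ((↑(n/2):ℝ) + 1) :=
            mul_le_mul_of_nonneg_left hcast hθ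
          rw [hD]; linarith
        refine ENNReal.ofReal_le_ofReal ?_
        rw [abs_of_neg hfx]
        exact one_div_le_one_div_of_le (by linarith) hub
      have idx : ∀ k : ℕ, k + (n/2 - N₀) + N₀ = k + n/2 := by omega
      calc (↑(n - n/2) : ENNReal) * ENNReal.ofReal (1/D)
          = ∑ _j ∈ Finset.range (n - n/2), ENNReal.ofReal (1/D) := by
            rw [Finset.sum_const, nsmul_eq_mul, Finset.card_range]
        _ ≤ ∑ j ∈ Finset.range (n - n/2), a (j + n/2) :=
            Finset.sum_le_sum fun j hj => hterm j (Finset.mem_range.1 hj)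
        _ ≤ ∑' k : ℕ, a (k + n/2) := ENNReal.sum_le_tsum _
        _ = ∑' k : ℕ, a (k + (n/2 - N₀) + N₀) := tsum_congr fun k => by rw [idx k]
    intro C hC
    have hε : (0:ℝ) < 1/(4*(C+θ+1)) := by positivity
    have hdiv : Tendsto (fun n : ℕ => n/2 - N₀) atTop atTop :=
      tendsto_atTop_atTop.2 fun b => ⟨2*(b+N₀), fun n hn => by omega⟩
    have hcomp : Tendsto (fun n : ℕ => ∑' k : ℕ, a (k + (n/2 - N₀) + N₀)) atTop (nhds 0) :=
      hT0.comp hdiv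
    have hev := hcomp.eventually (gt_mem_nhds (ENNReal.ofReal_pos.2 hε))
    filter_upwards [hev, eventually_ge_atTop (⌈θ⌉₊ + 2*N₀ + 1)] with n h1 h2
    have hn2 : 2*N₀ ≤ n := by omega
    have hb := lt_of_le_of_lt (hblock n hn2) h1
    have hfn : f n < 0 := hsign n (le_trans hN₀ (by exact_mod_cast (by omega : N₀ ≤ n)))
    set D : ℝ := -f n + θ*((↑(n/2):ℝ)+1) with hD
    have hDpos : 0 < D := by
      have : (0:ℝ) ≤ θ*((↑(n/2):ℝ)+1) := mul_nonneg hθ (by positivity)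
      rw [hD]; linarith
    set k : ℕ := n - n/2 with hk
    have hcast : (↑k : ENNReal) * ENNReal.ofReal (1/D) = ENNReal.ofReal ((k:ℝ) * (1/D)) := by
      rw [ENNReal.ofReal_mul (Nat.cast_nonneg k), ENNReal.ofReal_natCast]
    rw [hcast] at hb
    have hreal : (k:ℝ) * (1/D) < 1/(4*(C+θ+1)) := (ENNReal.ofReal_lt_ofReal_iff hε).1 hb
    have h4 : 4*(C+θ+1)*(k:ℝ) < D := by
      rw [mul_one_div, div_lt_div_iff₀ hDpos (by positivity)] at hreal
      linarith
    have hk1 : (n:ℝ) ≤ 2*(k:ℝ) := by exact_mod_cast (by omega : n ≤ 2*(n - n/2))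
    have hk2 : 2*(↑(n/2):ℝ) ≤ (n:ℝ) := by exact_mod_cast (by omega : 2*(n/2) ≤ n)
    have hMn : θ ≤ (n:ℝ) := le_trans (Nat.le_ceil θ) (by exact_mod_cast (by omega : ⌈θ⌉₊ ≤ n))
    have hint1 : (C+θ+1)*(n:ℝ) ≤ (C+θ+1)*(2*(k:ℝ)) :=
      mul_le_mul_of_nonneg_left hk1 (by positivity)
    have hint2 : θ*(2*(↑(n/2):ℝ)) ≤ θ*(n:ℝ) := mul_le_mul_of_nonneg_left hk2 hθ
    have hCn : (0:ℝ) ≤ C*(n:ℝ) := mul_nonneg hC.le (Nat.cast_nonneg n)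
    have hθn : (0:ℝ) ≤ θ*(n:ℝ) := mul_nonneg hθ (Nat.cast_nonneg n)
    rw [hD] at h4
    linarith

  have hPpos : ∀ n : ℕ, 1 ≤ n → 0 < P n := by
    intro n hn
    rcases eq_or_lt_of_le hn with h | h
    · rw [← h, hP1]; norm_num
    · rw [hPn n h]
      exact div_pos
        (Finset.prod_pos fun i hi => hlampos i (Finset.mem_Icc.1 hi).1)
        (Finset.prod_pos fun i hi => hmunpos i (le_trans (by norm_num) (Finset.mem_Icc.1 hi).1))
  have hPratio : ∀ n : ℕ, 1 ≤ n → P (n+2) / P (n+1) = lamn (n+2) / mun (n+2) := by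
    intro n hn
    have h1 : P (n+2) = (∏ i ∈ Finset.Icc 1 (n+2), lamn i) / (∏ i ∈ Finset.Icc 2 (n+2), mun i) :=
      hPn _ (by omega)
    have h2 : P (n+1) = (∏ i ∈ Finset.Icc 1 (n+1), lamn i) / (∏ i ∈ Finset.Icc 2 (n+1), mun i) :=
      hPn _ (by omega)
    have e1 : ∏ i ∈ Finset.Icc 1 (n+2), lamn i
        = (∏ i ∈ Finset.Icc 1 (n+1), lamn i) * lamn (n+2) :=
      Finset.prod_Icc_succ_top (by omega) _
    have e2 : ∏ i ∈ Finset.Icc 2 (n+2), mun i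
        = (∏ i ∈ Finset.Icc 2 (n+1), mun i) * mun (n+2) :=
      Finset.prod_Icc_succ_top (by omega) _
    have hL : (0:ℝ) < ∏ i ∈ Finset.Icc 1 (n+1), lamn i :=
      Finset.prod_pos fun i hi => hlampos i (Finset.mem_Icc.1 hi).1
    have hM : (0:ℝ) < ∏ i ∈ Finset.Icc 2 (n+1), mun i :=
      Finset.prod_pos fun i hi => hmunpos i (le_trans (by norm_num) (Finset.mem_Icc.1 hi).1)
    have hm2 : (0:ℝ) < mun (n+2) := hmunpos _ (by omega)
    rw [h1, h2, e1, e2]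
    field_simp
  have hratio0 : Tendsto (fun n : ℕ => lamn (n+2) / mun (n+2)) atTop (nhds 0) := by
    rw [Metric.tendsto_atTop]
    intro ε hε
    set C : ℝ := (lam + θ) / ε with hCdef
    have hCpos : 0 < C := div_pos (by linarith) hε
    obtain ⟨N, hN⟩ := eventually_atTop.1 (hgrow C hCpos)
    refine ⟨N, fun n hn => ?_⟩
    have hg : C * (n+2:ℕ) ≤ -f (n+2:ℕ) := hN (n+2) (by omega)
    have hnn : (0:ℝ) < ((n+2:ℕ):ℝ) := by positivity
    have hmun2 : (mu + C) * ((n+2:ℕ):ℝ) ≤ mun (n+2) := by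
      have := hmu_lb (n+2)
      push_cast at hg this ⊢
      nlinarith
    have hmunpos2 : (0:ℝ) < (mu + C) * ((n+2:ℕ):ℝ) := by positivity
    have hlub := hlam_ub (n+2)
    have hlpos : (0:ℝ) < lamn (n+2) := hlampos _ (by omega)
    have hub : lamn (n+2) / mun (n+2) ≤ (lam + θ) / (mu + C) := by
      have h := div_le_div₀ (by positivity : (0:ℝ) ≤ (lam + θ) * ((n+2:ℕ):ℝ))
        hlub hmunpos2 hmun2
      calc lamn (n+2) / mun (n+2) ≤ ((lam + θ) * ((n+2:ℕ):ℝ)) / ((mu + C) * ((n+2:ℕ):ℝ)) := h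
        _ = (lam + θ) / (mu + C) := by
            rw [mul_div_mul_right _ _ (ne_of_gt hnn)]
    have hlt : (lam + θ) / (mu + C) < ε := by
      rw [div_lt_iff₀ (by linarith)]
      have : ε * C = lam + θ := by
        rw [hCdef]; field_simp
      nlinarith
    have hge0 : 0 ≤ lamn (n+2) / mun (n+2) :=
      div_nonneg hlpos.le (hmunpos _ (by omega)).le
    rw [Real.dist_eq, sub_zero, abs_of_nonneg hge0]
    exact lt_of_le_of_lt hub hlt
  have htend : Tendsto (fun n : ℕ => P (n + 2) / P (n + 1)) atTop (nhds 0) := by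
    refine hratio0.congr' ?_
    filter_upwards [eventually_ge_atTop 1] with n hn
    exact (hPratio n hn).symm
  refine ⟨htend, ?_⟩
  have hev : ∀ᶠ n : ℕ in atTop, P (n+2) / P (n+1) < 1/2 :=
    htend.eventually (gt_mem_nhds (by norm_num : (0:ℝ) < 1/2))
  obtain ⟨N, hN⟩ := eventually_atTop.1 hev
  have hdecay : ∀ j : ℕ, P (N+1+j) ≤ P (N+1) / 2^j := by
    intro j
    induction j with
    | zero => simp
    | succ j ih =>
      have hPj : 0 < P (N+1+j) := hPpos _ (by omega)
      have hr := hN (N+j) (by omega)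
      have he : N+1+(j+1) = (N+j)+2 := by omega
      have he2 : N+1+j = (N+j)+1 := by omega
      rw [he]
      have : P ((N+j)+2) < P ((N+j)+1) * (1/2) := by
        rw [div_lt_iff₀ (by rw [← he2]; exact hPj)] at hr
        linarith [hr]
      calc P ((N+j)+2) ≤ P ((N+j)+1) * (1/2) := this.le
        _ = P (N+1+j) * (1/2) := by rw [he2]
        _ ≤ (P (N+1) / 2^j) * (1/2) := by nlinarith [ih]
        _ = P (N+1) / 2^(j+1) := by ring
  obtain ⟨K, hK⟩ := pow_unbounded_of_one_lt (P (N+1)) (by norm_num : (1:ℝ) < 2)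
  refine aux_tsum_top_of_one_le _ (N + K) fun n hn => ?_
  have hsmall : P (n+1) ≤ 1 := by
    have hj : n + 1 = N + 1 + (n - N) := by omega
    have h1 : P (n+1) ≤ P (N+1) / 2^(n-N) := by rw [hj]; exact hdecay (n - N)
    have h2 : (2:ℝ)^K ≤ 2^(n-N) := pow_le_pow_right₀ (by norm_num) (by omega)
    have hPN : 0 < P (N+1) := hPpos _ (by omega)
    have h3 : P (N+1) / 2^(n-N) ≤ P (N+1) / 2^K :=
      div_le_div_of_nonneg_left hPN.le (by positivity) h2
    have h4 : P (N+1) / 2^K ≤ 1 := by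
      rw [div_le_one (by positivity)]
      exact hK.le
    linarith
  have hp : 0 < P (n+1) := hPpos _ (by omega)
  rw [ENNReal.one_le_ofReal]
  rw [le_div_iff₀ hp]
  linarith
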